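/- Let p > q ≥ 1 be real numbers. The function h(x) = (x^p - x^q)/(x - 1), defined on [0,1) (with h(0)=0), is strictly increasing on [0,1). -/

import Mathlib

open Real Set

private lemma g_deriv_neg (p q : ℝ) (hq : 1 ≤ q) (hpq : q < p) {x : ℝ}
    (hx0 : 0 < x) (hx1 : x < 1) :
    (p - 1) * ((p - q + 1) * x ^ (p - q + 1 - 1)) - p * ((p - q) * x ^ (p - q - 1))
      - (q - 1) < 0 := by
  set r := p - q with hr
  have hr0 : 0 < r := sub_pos.mpr hpq
  have hp1 : 1 < p := lt_of_le_of_lt hq hpq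
  have h1 : x ^ (r + 1 - 1) = x ^ r := by norm_num
  have h2 : x ^ r = x ^ (r - 1) * x := by
    have h := Real.rpow_add hx0 (r - 1) 1
    rw [Real.rpow_one] at h
    rw [← h]; norm_num
  have hxr1 : x ^ r < 1 := Real.rpow_lt_one hx0.le hx1 hr0
  have hxrr : x ^ r < x ^ (r - 1) := by
    rw [h2]
    have := Real.rpow_pos_of_pos hx0 (r - 1)
    nlinarith
  have key : (p - 1) * (r + 1) = p * r + (q - 1) := by rw [hr]; ring
  have hpr : 0 < p * r := mul_pos (by linarith) hr0
  have hq1 : 0 ≤ q - 1 := by linarith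
  rw [h1]
  have expand : (p - 1) * ((r + 1) * x ^ r) - p * (r * x ^ (r - 1)) - (q - 1)
      = p * r * (x ^ r - x ^ (r - 1)) + (q - 1) * (x ^ r - 1) := by
    nlinarith [key]
  rw [expand]
  have t1 : p * r * (x ^ r - x ^ (r - 1)) < 0 :=
    mul_neg_of_pos_of_neg hpr (by linarith)
  have t2 : (q - 1) * (x ^ r - 1) ≤ 0 :=
    mul_nonpos_of_nonneg_of_nonpos hq1 (by linarith)
  linarith

private lemma g_pos (p q : ℝ) (hq : 1 ≤ q) (hpq : q < p) {x : ℝ}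
    (hx0 : 0 < x) (hx1 : x < 1) :
    0 < (p - 1) * x ^ (p - q + 1) - p * x ^ (p - q) - (q - 1) * x + q := by
  set r := p - q with hr
  have hr0 : 0 < r := sub_pos.mpr hpq
  set g : ℝ → ℝ := fun y => (p - 1) * y ^ (r + 1) - p * y ^ r - (q - 1) * y + q with hg
  have hanti : StrictAntiOn g (Set.Icc 0 1) := by
    apply strictAntiOn_of_deriv_neg (convex_Icc 0 1)
    · apply ContinuousOn.add
      apply ContinuousOn.sub
      apply ContinuousOn.sub
      · exact continuousOn_const.mul (fun y _ =>
          (Real.continuousAt_rpow_const y (r + 1) (Or.inr (by linarith))).continuousWithinAt)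
      · exact continuousOn_const.mul (fun y _ =>
          (Real.continuousAt_rpow_const y r (Or.inr hr0.le)).continuousWithinAt)
      · exact continuousOn_const.mul continuousOn_id
      · exact continuousOn_const
    · intro y hy
      rw [interior_Icc] at hy
      have hd : HasDerivAt g ((p - 1) * ((r + 1) * y ^ (r + 1 - 1)) - p * (r * y ^ (r - 1))
          - (q - 1)) y := by
        have d1 : HasDerivAt (fun y : ℝ => y ^ (r + 1)) ((r + 1) * y ^ (r + 1 - 1)) y :=
          Real.hasDerivAt_rpow_const (Or.inl hy.1.ne')
        have d2 : HasDerivAt (fun y : ℝ => y ^ r) (r * y ^ (r - 1)) y :=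
          Real.hasDerivAt_rpow_const (Or.inl hy.1.ne')
        have d3 : HasDerivAt (fun y : ℝ => (q - 1) * y) (q - 1) y := by
          simpa using (hasDerivAt_id y).const_mul (q - 1)
        exact (((d1.const_mul (p - 1)).sub (d2.const_mul p)).sub d3).add_const q
      rw [hd.deriv]
      have := g_deriv_neg p q hq hpq hy.1 hy.2
      rw [hr] at *
      linarith
  have h1 : g 1 = 0 := by
    simp only [hg, Real.one_rpow, mul_one]
    ring
  have := hanti (Set.mem_Icc.mpr ⟨hx0.le, hx1.le⟩) (Set.mem_Icc.mpr ⟨zero_le_one, le_refl 1⟩) hx1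
  rw [h1] at this
  exact this

private lemma numer_pos (p q : ℝ) (hq : 1 ≤ q) (hpq : q < p) {x : ℝ}
    (hx0 : 0 < x) (hx1 : x < 1) :
    0 < (p * x ^ (p - 1) - q * x ^ (q - 1)) * (x - 1) - (x ^ p - x ^ q) * 1 := by
  have hg := g_pos p q hq hpq hx0 hx1
  have e1 : x ^ p = x ^ (q - 1) * x ^ (p - q + 1) := by
    rw [← Real.rpow_add hx0]; ring_nf
  have e2 : x ^ (p - 1) = x ^ (q - 1) * x ^ (p - q) := by
    rw [← Real.rpow_add hx0]; ring_nf
  have e3 : x ^ q = x ^ (q - 1) * x := by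
    have h := Real.rpow_add hx0 (q - 1) 1
    rw [Real.rpow_one] at h
    rw [← h]; norm_num
  have e4 : x ^ (p - q + 1) = x ^ (p - q) * x := by
    have h := Real.rpow_add hx0 (p - q) 1
    rw [Real.rpow_one] at h
    rw [← h]
  have hxq : 0 < x ^ (q - 1) := Real.rpow_pos_of_pos hx0 (q - 1)
  have expand : (p * x ^ (p - 1) - q * x ^ (q - 1)) * (x - 1) - (x ^ p - x ^ q) * 1
      = x ^ (q - 1) * ((p - 1) * x ^ (p - q + 1) - p * x ^ (p - q) - (q - 1) * x + q) := by
    rw [e1, e2, e3, e4]; ring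
  rw [expand]
  exact mul_pos hxq hg

theorem h_strictMono (p q : ℝ) (hq : 1 ≤ q) (hpq : q < p) :
    StrictMonoOn (fun x : ℝ => (x ^ p - x ^ q) / (x - 1)) (Set.Ico 0 1) := by
  have hp1 : 1 < p := lt_of_le_of_lt hq hpq
  apply strictMonoOn_of_deriv_pos (convex_Ico 0 1)
  · apply ContinuousOn.div
    · apply ContinuousOn.sub
      · exact fun y _ =>
          (Real.continuousAt_rpow_const y p (Or.inr (by linarith))).continuousWithinAt
      · exact fun y _ =>
          (Real.continuousAt_rpow_const y q (Or.inr (by linarith))).continuousWithinAt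
    · exact (continuousOn_id.sub continuousOn_const)
    · intro y hy
      have : y < 1 := hy.2
      intro h
      apply this.ne
      linarith [sub_eq_zero.mp h]
  · intro x hx
    rw [interior_Ico] at hx
    obtain ⟨hx0, hx1⟩ := hx
    have hN : HasDerivAt (fun y : ℝ => y ^ p - y ^ q)
        (p * x ^ (p - 1) - q * x ^ (q - 1)) x :=
      (Real.hasDerivAt_rpow_const (Or.inl hx0.ne')).sub
        (Real.hasDerivAt_rpow_const (Or.inl hx0.ne'))
    have hD : HasDerivAt (fun y : ℝ => y - 1) 1 x := (hasDerivAt_id x).sub_const 1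
    have hD0 : x - 1 ≠ 0 := by intro h; apply hx1.ne; linarith [sub_eq_zero.mp h]
    have hdiv : HasDerivAt (fun y : ℝ => (y ^ p - y ^ q) / (y - 1))
        (((p * x ^ (p - 1) - q * x ^ (q - 1)) * (x - 1) - (x ^ p - x ^ q) * 1) / (x - 1) ^ 2) x :=
      hN.div hD hD0
    rw [hdiv.deriv]
    apply div_pos (numer_pos p q hq hpq hx0 hx1)
    positivity
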